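/- Let P ∈ Ã be a monic polynomial in a of degree d with coefficients in C[[b]], and suppose the initial homogeneous form of P in (a,b) equals b^q for some integer q < d. Then the (a,b)-module E := Ã/Ã·P is totally irregular: every Ã-linear map f : E → F to a simple pole (a,b)-module F is zero. -/

import Mathlib

open PowerSeries

/-- Let `P = a^d + Σ_{k<d} c_k(b)·a^k ∈ Ã` be monic in `a` of degree `d` with
coefficients `c_k ∈ ℂ⟦b⟧`, and suppose the initial homogeneous form of `P` in
`(a,b)` equals `b^q` for some `q < d`.  Then the (a,b)-module `E := Ã/Ã·P` is
totally irregular: every `Ã`-linear map `E → F` to a simple pole (a,b)-module `F`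
is zero.  Equivalently (a map `E → F` is determined by the image `x` of `1`,
which satisfies `P·x = 0`): for every simple pole (a,b)-module `F` and every
`x ∈ F` with `P·x = 0`, one has `x = 0`. -/
theorem quotient_by_P_totally_irregular
    (d q : ℕ) (hqd : q < d) (c : ℕ → ℂ⟦X⟧)
    -- the initial form of `P` in (a,b) is `b^q` : all terms of total degree `< q`
    -- vanish and the degree-`q` homogeneous part is exactly `b^q`
    (hval : ∀ k m : ℕ, k < d → k + m < q → PowerSeries.coeff m (c k) = 0)
    (hinit : ∀ k m : ℕ, k < d → k + m = q →
      PowerSeries.coeff m (c k) = if k = 0 then 1 else 0) :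
    ∀ (F : Type) (_ : AddCommGroup F) (_ : Module ℂ F) (_ : Module (PowerSeries ℂ) F)
      (_ : IsScalarTower ℂ (PowerSeries ℂ) F)
      (_ : Module.Free (PowerSeries ℂ) F) (_ : Module.Finite (PowerSeries ℂ) F)
      (a : Module.End ℂ F)
      (_ : ∀ x : F, a ((X : ℂ⟦X⟧) • x) = (X : ℂ⟦X⟧) • a x + ((X * X : ℂ⟦X⟧)) • x)
      -- `F` has a simple pole : `a·F ⊆ b·F`
      (_ : ∀ x : F, ∃ y : F, a x = (X : ℂ⟦X⟧) • y)
      (x : F),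
      (a ^ d) x + ∑ k ∈ Finset.range d, c k • ((a ^ k) x) = 0 → x = 0 := by
  intro F _ _ _ _ _ _ a hcomm hpole x hP
  classical
  by_contra hx
  -- commutation of `a` with powers of `X`
  have hcommpow : ∀ (n : ℕ) (y : F),
      a ((X : ℂ⟦X⟧) ^ n • y) = (X : ℂ⟦X⟧) ^ n • a y + n • ((X : ℂ⟦X⟧) ^ (n + 1) • y) := by
    intro n
    induction n with
    | zero => intro y; simp
    | succ n ih =>
      intro y
      have h1 : (X : ℂ⟦X⟧) ^ (n + 1) • y = (X : ℂ⟦X⟧) • ((X : ℂ⟦X⟧) ^ n • y) := by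
        rw [← mul_smul, mul_comm, ← pow_succ]
      rw [h1, hcomm, ih, smul_add]
      have h2 : (X : ℂ⟦X⟧) • ((X : ℂ⟦X⟧) ^ n • a y) = (X : ℂ⟦X⟧) ^ (n + 1) • a y := by
        rw [← mul_smul, mul_comm, ← pow_succ]
      have h3 : (X : ℂ⟦X⟧) • (n • ((X : ℂ⟦X⟧) ^ (n + 1) • y))
          = n • ((X : ℂ⟦X⟧) ^ (n + 2) • y) := by
        rw [smul_comm]
        congr 1
        rw [← mul_smul, mul_comm, ← pow_succ]
      have h4 : ((X : ℂ⟦X⟧) * X) • ((X : ℂ⟦X⟧) ^ n • y) = (X : ℂ⟦X⟧) ^ (n + 2) • y := by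
        rw [← mul_smul]
        congr 1
        ring
      rw [h2, h3, h4, succ_nsmul]
      abel
  -- simple pole pushes `a` into higher powers of `X`
  have hstep : ∀ (n : ℕ) (z : F), (∃ y, z = (X : ℂ⟦X⟧) ^ n • y) →
      ∃ y, a z = (X : ℂ⟦X⟧) ^ (n + 1) • y := by
    rintro n z ⟨y, rfl⟩
    obtain ⟨w, hw⟩ := hpole y
    refine ⟨w + n • y, ?_⟩
    rw [hcommpow, hw, smul_add]
    congr 1
    · rw [← mul_smul, ← pow_succ]
    · rw [smul_comm]
  have hiter : ∀ (k n : ℕ) (z : F), (∃ y, z = (X : ℂ⟦X⟧) ^ n • y) →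
      ∃ y, (a ^ k) z = (X : ℂ⟦X⟧) ^ (n + k) • y := by
    intro k
    induction k with
    | zero => intro n z hz; simpa using hz
    | succ k ih =>
      intro n z hz
      obtain ⟨y, hy⟩ := ih n z hz
      obtain ⟨w, hw⟩ := hstep (n + k) ((a ^ k) z) ⟨y, hy⟩
      refine ⟨w, ?_⟩
      have hz1 : (a ^ (k + 1)) z = a ((a ^ k) z) := by
        rw [pow_succ', Module.End.mul_apply]
      rw [hz1, hw, Nat.add_assoc]
  -- ⋂ₙ Xⁿ F = 0
  have hcap : ∀ z : F, (∀ n : ℕ, ∃ y, z = (X : ℂ⟦X⟧) ^ n • y) → z = 0 := by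
    intro z hz
    set B := Module.Free.chooseBasis ℂ⟦X⟧ F with hB
    have hrep : ∀ i, B.repr z i = 0 := by
      intro i
      ext m
      obtain ⟨y, hy⟩ := hz (m + 1)
      have hco : B.repr z i = (X : ℂ⟦X⟧) ^ (m + 1) * B.repr y i := by
        rw [hy, map_smul, Finsupp.smul_apply, smul_eq_mul]
      have hdvd : (X : ℂ⟦X⟧) ^ (m + 1) ∣ B.repr z i := ⟨B.repr y i, hco⟩
      have := (PowerSeries.X_pow_dvd_iff).mp hdvd m (Nat.lt_succ_self m)
      simpa using this
    have h0 : B.repr z = 0 := Finsupp.ext fun i => hrep i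
    have := congrArg B.repr.symm h0
    simpa using this
  -- valuation of x
  have hex : ∃ n : ℕ, ¬ ∃ y, x = (X : ℂ⟦X⟧) ^ n • y := by
    by_contra h
    push_neg at h
    exact hx (hcap x h)
  set n₀ := Nat.find hex with hn₀
  have hn₀pos : 0 < n₀ := by
    rcases Nat.eq_zero_or_pos n₀ with h | h
    · exfalso
      have := Nat.find_spec hex
      rw [← hn₀, h] at this
      exact this ⟨x, by simp⟩
    · exact h
  set v := n₀ - 1 with hv
  have hvx : ∃ u, x = (X : ℂ⟦X⟧) ^ v • u := by
    by_contra h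
    have := Nat.find_min' hex h
    omega
  have hnvx : ¬ ∃ y, x = (X : ℂ⟦X⟧) ^ (v + 1) • y := by
    have hveq : v + 1 = n₀ := by omega
    rw [hveq]
    exact Nat.find_spec hex
  obtain ⟨u, hu⟩ := hvx
  set N := q + v + 1 with hN
  -- terms with 1 ≤ k < d lie in X^N F
  have hdvdterm : ∀ k : ℕ, 1 ≤ k → k < d → ∃ w, c k • ((a ^ k) x) = (X : ℂ⟦X⟧) ^ N • w := by
    intro k hk1 hkd
    obtain ⟨y, hy⟩ := hiter k v x ⟨u, hu⟩
    by_cases hkq : k ≤ q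
    · -- X^(q-k+1) ∣ c k
      have hdvd : (X : ℂ⟦X⟧) ^ (q - k + 1) ∣ c k := by
        rw [PowerSeries.X_pow_dvd_iff]
        intro m hm
        rcases lt_or_eq_of_le (Nat.lt_succ_iff.mp hm) with h | h
        · exact hval k m hkd (by omega)
        · have := hinit k m hkd (by omega)
          rw [this, if_neg (by omega)]
      obtain ⟨g, hg⟩ := hdvd
      refine ⟨g • y, ?_⟩
      calc c k • ((a ^ k) x)
          = ((X : ℂ⟦X⟧) ^ (q - k + 1) * g) • ((X : ℂ⟦X⟧) ^ (v + k) • y) := by rw [hy, hg]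
        _ = ((X : ℂ⟦X⟧) ^ (q - k + 1) * g * (X : ℂ⟦X⟧) ^ (v + k)) • y :=
            (mul_smul _ _ _).symm
        _ = ((X : ℂ⟦X⟧) ^ N * g) • y := by
            congr 1
            rw [show N = q - k + 1 + (v + k) by omega, pow_add]
            ring
        _ = (X : ℂ⟦X⟧) ^ N • (g • y) := mul_smul _ _ _
    · -- k ≥ q + 1, so v + k ≥ N already
      refine ⟨((X : ℂ⟦X⟧) ^ (v + k - N) * c k) • y, ?_⟩
      have e : (X : ℂ⟦X⟧) ^ (v + k) = (X : ℂ⟦X⟧) ^ N * (X : ℂ⟦X⟧) ^ (v + k - N) := by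
        rw [← pow_add]
        congr 1
        omega
      calc c k • ((a ^ k) x)
          = (c k * (X : ℂ⟦X⟧) ^ (v + k)) • y := by rw [hy, ← mul_smul]
        _ = ((X : ℂ⟦X⟧) ^ N * ((X : ℂ⟦X⟧) ^ (v + k - N) * c k)) • y := by
            rw [e]
            congr 1
            ring
        _ = (X : ℂ⟦X⟧) ^ N • (((X : ℂ⟦X⟧) ^ (v + k - N) * c k) • y) := mul_smul _ _ _
  -- the term k = 0
  have hc0 : ∃ w, c 0 • x = (X : ℂ⟦X⟧) ^ (q + v) • u + (X : ℂ⟦X⟧) ^ N • w := by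
    have hdvd : (X : ℂ⟦X⟧) ^ (q + 1) ∣ c 0 - (X : ℂ⟦X⟧) ^ q := by
      rw [PowerSeries.X_pow_dvd_iff]
      intro m hm
      rcases lt_or_eq_of_le (Nat.lt_succ_iff.mp hm) with h | h
      · rw [map_sub, hval 0 m (by omega) (by omega), PowerSeries.coeff_X_pow,
          if_neg (by omega), sub_zero]
      · rw [map_sub, hinit 0 m (by omega) (by omega), if_pos rfl,
          PowerSeries.coeff_X_pow, if_pos h, sub_self]
    obtain ⟨g, hg⟩ := hdvd
    have hc0eq : c 0 = (X : ℂ⟦X⟧) ^ q + (X : ℂ⟦X⟧) ^ (q + 1) * g := by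
      rw [← hg]; ring
    refine ⟨g • u, ?_⟩
    calc c 0 • x
        = (X : ℂ⟦X⟧) ^ q • x + ((X : ℂ⟦X⟧) ^ (q + 1) * g) • x := by
          rw [hc0eq, add_smul]
      _ = (X : ℂ⟦X⟧) ^ (q + v) • u + (X : ℂ⟦X⟧) ^ N • (g • u) := by
          congr 1
          · rw [hu, ← mul_smul, ← pow_add]
          · calc ((X : ℂ⟦X⟧) ^ (q + 1) * g) • x
                = ((X : ℂ⟦X⟧) ^ (q + 1) * g * (X : ℂ⟦X⟧) ^ v) • u := by
                  rw [hu, ← mul_smul]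
              _ = ((X : ℂ⟦X⟧) ^ N * g) • u := by
                  congr 1
                  rw [show N = q + 1 + v by omega, pow_add]
                  ring
              _ = (X : ℂ⟦X⟧) ^ N • (g • u) := mul_smul _ _ _
  -- the leading term
  have hlead : ∃ w, (a ^ d) x = (X : ℂ⟦X⟧) ^ N • w := by
    obtain ⟨y, hy⟩ := hiter d v x ⟨u, hu⟩
    refine ⟨(X : ℂ⟦X⟧) ^ (v + d - N) • y, ?_⟩
    rw [hy, ← mul_smul, ← pow_add, show N + (v + d - N) = v + d by omega]
  -- the sum over k ∈ (range d).erase 0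
  have hsum : ∃ w, ∑ k ∈ (Finset.range d).erase 0, c k • ((a ^ k) x)
      = (X : ℂ⟦X⟧) ^ N • w := by
    set g : ℕ → F := fun k =>
      if h : 1 ≤ k ∧ k < d then (hdvdterm k h.1 h.2).choose else 0 with hgdef
    refine ⟨∑ k ∈ (Finset.range d).erase 0, g k, ?_⟩
    rw [Finset.smul_sum]
    refine Finset.sum_congr rfl ?_
    intro k hk
    simp only [Finset.mem_erase, Finset.mem_range] at hk
    have h : 1 ≤ k ∧ k < d := ⟨Nat.one_le_iff_ne_zero.mpr hk.1, hk.2⟩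
    have hspec := (hdvdterm k h.1 h.2).choose_spec
    rw [hgdef]
    simpa [dif_pos h] using hspec
  obtain ⟨w₀, hw₀⟩ := hc0
  obtain ⟨ws, hws⟩ := hsum
  obtain ⟨wd, hwd⟩ := hlead
  have h0mem : (0 : ℕ) ∈ Finset.range d := Finset.mem_range.mpr (by omega)
  have hsplit := (Finset.add_sum_erase (Finset.range d)
      (fun k => c k • ((a ^ k) x)) h0mem).symm
  simp only [pow_zero, Module.End.one_apply] at hsplit
  rw [hsplit, hwd, hw₀, hws] at hP
  -- so X^(q+v) • u + X^N • (wd + w₀ + ws) = 0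
  have key : (X : ℂ⟦X⟧) ^ (q + v) • u + (X : ℂ⟦X⟧) ^ N • (wd + w₀ + ws) = 0 := by
    rw [smul_add, smul_add, ← hP]
    abel
  have key2 : (X : ℂ⟦X⟧) ^ (q + v) • (u + (X : ℂ⟦X⟧) • (wd + w₀ + ws)) = 0 := by
    rw [smul_add, ← mul_smul, ← pow_succ, ← hN]
    exact key
  have hXpow : ((X : ℂ⟦X⟧) ^ (q + v)) ≠ 0 := pow_ne_zero _ PowerSeries.X_ne_zero
  have huz : u + (X : ℂ⟦X⟧) • (wd + w₀ + ws) = 0 := by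
    rcases smul_eq_zero.mp key2 with h | h
    · exact absurd h hXpow
    · exact h
  have hu' : u = -((X : ℂ⟦X⟧) • (wd + w₀ + ws)) := eq_neg_of_add_eq_zero_left huz
  refine hnvx ⟨-(wd + w₀ + ws), ?_⟩
  rw [hu, hu', smul_neg, smul_neg, ← mul_smul, ← pow_succ]
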